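/- Let V be a finite type with two distinct distinguished vertices o and o′, and let E ⊆ V × V be a set of arcs with no self-loops such that: no arc of E enters o and no arc of E leaves o′; exactly one arc of E leaves o; exactly one arc of E enters o′; and every vertex v ∉ {o, o′} has its in-degree in E equal to its out-degree in E. Suppose further there exist t : V → ℝ and ε > 0 with t(v) ≥ t(u) + ε for every (u, v) ∈ E. Then the arcs of E form a simple directed path from o to o′: there is a duplicate-free list of vertices o = v₀, v₁, …, v_n = o′ with n ≥ 1 such that E is exactly the set {(v_i, v_{i+1}) : 0 ≤ i < n}. -/

import Mathlib

lemma cut_le_one {V : Type*} [Fintype V] [DecidableEq V] (o o' : V)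
    (E : Finset (V × V))
    (h_no_out_o' : ∀ v : V, (o', v) ∉ E)
    (h_out_o : (E.filter (fun e => e.1 = o)).card ≤ 1)
    (h_balance : ∀ v : V, v ≠ o → v ≠ o' →
      (E.filter (fun e => e.2 = v)).card = (E.filter (fun e => e.1 = v)).card)
    (S : Finset V)
    (h_closed : ∀ e ∈ E, e.2 ∈ S → e.1 ∈ S) :
    (E.filter (fun e => e.1 ∈ S ∧ e.2 ∉ S)).card ≤ 1 := by
  classical
  have h1 := Finset.card_filter_add_card_filter_not
    (s := E.filter (fun e => e.1 ∈ S)) (p := fun e => e.2 ∈ S)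
  rw [Finset.filter_filter, Finset.filter_filter] at h1
  have h2 : E.filter (fun e => e.2 ∈ S) = E.filter (fun e => e.1 ∈ S ∧ e.2 ∈ S) := by
    ext e
    simp only [Finset.mem_filter]
    exact ⟨fun ⟨he, h⟩ => ⟨he, h_closed e he h, h⟩, fun ⟨he, _, h⟩ => ⟨he, h⟩⟩
  have hsum1 : (E.filter (fun e => e.1 ∈ S)).card
      = ∑ v ∈ S, (E.filter (fun e => e.1 = v)).card := by
    rw [Finset.card_eq_sum_card_fiberwise (s := E.filter (fun e => e.1 ∈ S)) (f := Prod.fst) (t := S)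
      (fun e he => (Finset.mem_filter.mp he).2)]
    refine Finset.sum_congr rfl fun v hv => ?_
    rw [Finset.filter_filter]
    congr 1
    ext e
    simp only [Finset.mem_filter]
    constructor
    · rintro ⟨he, _, h⟩; exact ⟨he, h⟩
    · rintro ⟨he, h⟩; exact ⟨he, h ▸ hv, h⟩
  have hsum2 : (E.filter (fun e => e.2 ∈ S)).card
      = ∑ v ∈ S, (E.filter (fun e => e.2 = v)).card := by
    rw [Finset.card_eq_sum_card_fiberwise (s := E.filter (fun e => e.2 ∈ S)) (f := Prod.snd) (t := S)
      (fun e he => (Finset.mem_filter.mp he).2)]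
    refine Finset.sum_congr rfl fun v hv => ?_
    rw [Finset.filter_filter]
    congr 1
    ext e
    simp only [Finset.mem_filter]
    constructor
    · rintro ⟨he, _, h⟩; exact ⟨he, h⟩
    · rintro ⟨he, h⟩; exact ⟨he, h ▸ hv, h⟩
  have hterm : ∀ v ∈ S, (E.filter (fun e => e.1 = v)).card
      ≤ (E.filter (fun e => e.2 = v)).card + (if v = o then 1 else 0) := by
    intro v _
    by_cases hvo : v = o
    · subst hvo
      simp only [if_pos rfl]
      exact h_out_o.trans (Nat.le_add_left 1 _)
    · by_cases hvo' : v = o'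
      · have hemp : E.filter (fun e => e.1 = v) = ∅ := by
          ext e; simp only [Finset.mem_filter, Finset.notMem_empty, iff_false]
          rintro ⟨he, h⟩
          rw [hvo'] at h
          exact h_no_out_o' e.2 (by rw [← h, Prod.mk.eta]; exact he)
        simp [hemp]
      · rw [← h_balance v hvo hvo']
        exact Nat.le_add_right _ _
  have hle : ∑ v ∈ S, (E.filter (fun e => e.1 = v)).card
      ≤ (∑ v ∈ S, (E.filter (fun e => e.2 = v)).card) + 1 := by
    calc ∑ v ∈ S, (E.filter (fun e => e.1 = v)).card
        ≤ ∑ v ∈ S, ((E.filter (fun e => e.2 = v)).card + (if v = o then 1 else 0)) :=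
          Finset.sum_le_sum hterm
      _ = (∑ v ∈ S, (E.filter (fun e => e.2 = v)).card)
          + ∑ v ∈ S, (if v = o then 1 else 0) := Finset.sum_add_distrib
      _ ≤ (∑ v ∈ S, (E.filter (fun e => e.2 = v)).card) + 1 := by
          gcongr
          rw [Finset.sum_ite_eq' S o (fun _ => 1)]
          split <;> omega
  have hA : (E.filter (fun e => e.1 ∈ S ∧ e.2 ∈ S)).card
      = ∑ v ∈ S, (E.filter (fun e => e.2 = v)).card := by
    rw [← h2]; exact hsum2
  rw [hsum1] at h1
  omega

lemma indeg_le_one {V : Type*} [Fintype V] [DecidableEq V] (o o' : V)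
    (E : Finset (V × V))
    (h_no_out_o' : ∀ v : V, (o', v) ∉ E)
    (h_out_o : (E.filter (fun e => e.1 = o)).card ≤ 1)
    (h_balance : ∀ v : V, v ≠ o → v ≠ o' →
      (E.filter (fun e => e.2 = v)).card = (E.filter (fun e => e.1 = v)).card)
    (t : V → ℝ) (ε : ℝ) (hε : 0 < ε)
    (ht : ∀ u v : V, (u, v) ∈ E → t v ≥ t u + ε) (v : V) :
    (E.filter (fun e => e.2 = v)).card ≤ 1 := by
  classical
  set S : Finset V := Finset.univ.filter (fun x => t x ≤ t v - ε / 2) with hS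
  have hmemS : ∀ x : V, x ∈ S ↔ t x ≤ t v - ε / 2 := by
    intro x; simp [hS]
  have h_closed : ∀ e ∈ E, e.2 ∈ S → e.1 ∈ S := by
    intro e he h2
    rw [hmemS] at *
    have := ht e.1 e.2 (by rwa [Prod.mk.eta])
    linarith
  have hsub : E.filter (fun e => e.2 = v) ⊆ E.filter (fun e => e.1 ∈ S ∧ e.2 ∉ S) := by
    intro e he
    rw [Finset.mem_filter] at *
    obtain ⟨he, h2⟩ := he
    have harc := ht e.1 e.2 (by rwa [Prod.mk.eta])
    refine ⟨he, ?_, ?_⟩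
    · rw [hmemS]; rw [h2] at harc; linarith
    · rw [hmemS, h2]; linarith
  exact (Finset.card_le_card hsub).trans
    (cut_le_one o o' E h_no_out_o' h_out_o h_balance S h_closed)

lemma outdeg_le_one {V : Type*} [Fintype V] [DecidableEq V] (o o' : V)
    (E : Finset (V × V))
    (h_no_out_o' : ∀ v : V, (o', v) ∉ E)
    (h_out_o : (E.filter (fun e => e.1 = o)).card ≤ 1)
    (h_balance : ∀ v : V, v ≠ o → v ≠ o' →
      (E.filter (fun e => e.2 = v)).card = (E.filter (fun e => e.1 = v)).card)
    (t : V → ℝ) (ε : ℝ) (hε : 0 < ε)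
    (ht : ∀ u v : V, (u, v) ∈ E → t v ≥ t u + ε) (u : V) :
    (E.filter (fun e => e.1 = u)).card ≤ 1 := by
  classical
  set S : Finset V := Finset.univ.filter (fun x => t x ≤ t u + ε / 2) with hS
  have hmemS : ∀ x : V, x ∈ S ↔ t x ≤ t u + ε / 2 := by
    intro x; simp [hS]
  have h_closed : ∀ e ∈ E, e.2 ∈ S → e.1 ∈ S := by
    intro e he h2
    rw [hmemS] at *
    have := ht e.1 e.2 (by rwa [Prod.mk.eta])
    linarith
  have hsub : E.filter (fun e => e.1 = u) ⊆ E.filter (fun e => e.1 ∈ S ∧ e.2 ∉ S) := by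
    intro e he
    rw [Finset.mem_filter] at *
    obtain ⟨he, h1⟩ := he
    have harc := ht e.1 e.2 (by rwa [Prod.mk.eta])
    refine ⟨he, ?_, ?_⟩
    · rw [hmemS, h1]; linarith
    · rw [hmemS]; rw [h1] at harc; linarith
  exact (Finset.card_le_card hsub).trans
    (cut_le_one o o' E h_no_out_o' h_out_o h_balance S h_closed)

lemma path_aux {V : Type*} [Fintype V] [DecidableEq V] :
    ∀ (N : ℕ) (E : Finset (V × V)) (o o' : V), E.card ≤ N → o ≠ o' →
    (∀ v : V, (v, v) ∉ E) →
    (∀ u : V, (u, o) ∉ E) →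
    (∀ v : V, (o', v) ∉ E) →
    (E.filter (fun e => e.1 = o)).card = 1 →
    (E.filter (fun e => e.2 = o')).card = 1 →
    (∀ v : V, v ≠ o → v ≠ o' →
      (E.filter (fun e => e.2 = v)).card = (E.filter (fun e => e.1 = v)).card) →
    (∀ v : V, (E.filter (fun e => e.2 = v)).card ≤ 1) →
    (∀ v : V, (E.filter (fun e => e.1 = v)).card ≤ 1) →
    (∃ (t : V → ℝ) (ε : ℝ), 0 < ε ∧ ∀ u v : V, (u, v) ∈ E → t v ≥ t u + ε) →
    ∃ (n : ℕ) (v : ℕ → V), 1 ≤ n ∧ v 0 = o ∧ v n = o' ∧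
      (∀ i ≤ n, ∀ j ≤ n, v i = v j → i = j) ∧
      (∀ e : V × V, e ∈ E ↔ ∃ i < n, e = (v i, v (i + 1))) := by
  classical
  intro N
  induction N with
  | zero =>
    intro E o o' hcard _ _ _ _ h_out_o _ _ _ _ _
    have : E = ∅ := Finset.card_eq_zero.mp (Nat.le_zero.mp hcard)
    subst this
    simp at h_out_o
  | succ N ih =>
    intro E o o' hcard hoo' h_noloop h_no_in_o h_no_out_o' h_out_o h_in_o' h_balance
      h_in_le h_out_le h_time
    -- the unique arc leaving o
    obtain ⟨a, ha⟩ := Finset.card_eq_one.mp h_out_o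
    have haf : a ∈ E.filter (fun e => e.1 = o) := by
      rw [ha]; exact Finset.mem_singleton_self a
    have haE : a ∈ E := (Finset.mem_filter.mp haf).1
    have ha1 : a.1 = o := (Finset.mem_filter.mp haf).2
    set w := a.2 with hw
    have haow : a = (o, w) := by rw [← ha1, hw]
    have howE : (o, w) ∈ E := haow ▸ haE
    have hwo : w ≠ o := fun h => h_no_in_o o (h ▸ howE)
    -- the unique arc entering o'
    obtain ⟨b, hb⟩ := Finset.card_eq_one.mp h_in_o'
    have hbf : b ∈ E.filter (fun e => e.2 = o') := by
      rw [hb]; exact Finset.mem_singleton_self b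
    have hbE : b ∈ E := (Finset.mem_filter.mp hbf).1
    have hb2 : b.2 = o' := (Finset.mem_filter.mp hbf).2
    obtain ⟨t, ε, hε, ht⟩ := h_time
    by_cases hwo' : w = o'
    · -- base: E = {(o, o')}
      subst hwo'
      have hE : E = {(o, w)} := by
        by_contra hne
        have hne' : (E.erase (o, w)).Nonempty := by
          rw [Finset.nonempty_iff_ne_empty]
          intro hemp
          rcases (Finset.erase_eq_empty_iff E (o, w)).mp hemp with h | h
          · exact Finset.notMem_empty _ (h ▸ howE)
          · exact hne h
        obtain ⟨c, hc, hcmax⟩ := Finset.exists_max_image (E.erase (o, w)) (fun e => t e.2) hne'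
        have hcE : c ∈ E := Finset.mem_of_mem_erase hc
        have hcne : c ≠ (o, w) := Finset.ne_of_mem_erase hc
        have hbow : b = (o, w) := by
          have h1 : (o, w) ∈ E.filter (fun e => e.2 = w) := Finset.mem_filter.mpr ⟨howE, rfl⟩
          rw [hb, Finset.mem_singleton] at h1
          exact h1.symm
        have hc2 : c.2 ≠ w := by
          intro h
          have h1 : c ∈ E.filter (fun e => e.2 = w) := Finset.mem_filter.mpr ⟨hcE, h⟩
          rw [hb, Finset.mem_singleton] at h1
          exact hcne (h1.trans hbow)
        have hc2o : c.2 ≠ o := fun h => h_no_in_o c.1 (by rw [← h, Prod.mk.eta]; exact hcE)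
        have hin : 1 ≤ (E.filter (fun e => e.2 = c.2)).card :=
          Finset.card_pos.mpr ⟨c, Finset.mem_filter.mpr ⟨hcE, rfl⟩⟩
        have hout : 1 ≤ (E.filter (fun e => e.1 = c.2)).card := by
          rw [← h_balance c.2 hc2o hc2]; exact hin
        obtain ⟨d, hd⟩ := Finset.card_pos.mp hout
        rw [Finset.mem_filter] at hd
        have hdE : d ∈ E := hd.1
        have hd1 : d.1 = c.2 := hd.2
        have hdne : d ≠ (o, w) := by
          intro h
          rw [h] at hd1
          exact hc2o hd1.symm
        have hd' : d ∈ E.erase (o, w) := Finset.mem_erase.mpr ⟨hdne, hdE⟩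
        have h1 := hcmax d hd'
        have h2 := ht d.1 d.2 (by rw [Prod.mk.eta]; exact hdE)
        rw [hd1] at h2
        linarith
      refine ⟨1, fun i => match i with | 0 => o | _ + 1 => w, le_refl 1, rfl, rfl, ?_, ?_⟩
      · intro i hi j hj hij
        match i, j with
        | 0, 0 => rfl
        | 0, Nat.succ k => exact absurd hij hoo'
        | Nat.succ k, 0 => exact absurd hij.symm hoo'
        | Nat.succ k, Nat.succ l => omega
      · intro e
        rw [hE, Finset.mem_singleton]
        constructor
        · intro h; exact ⟨0, Nat.one_pos, h⟩
        · rintro ⟨i, hi, h⟩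
          match i with
          | 0 => exact h
    · -- inductive step: remove (o, w), recurse with source w
      set E' := E.erase (o, w) with hE'
      have hsub : E' ⊆ E := Finset.erase_subset _ _
      have hcard' : E'.card ≤ N := by
        rw [hE', Finset.card_erase_of_mem howE]
        have h1 : 1 ≤ E.card := Finset.card_pos.mpr ⟨_, howE⟩
        omega
      -- in-degree of w in E is exactly 1, realized by (o, w)
      have h_in_w : E.filter (fun e => e.2 = w) = {(o, w)} := by
        apply Finset.eq_singleton_iff_unique_mem.mpr
        refine ⟨Finset.mem_filter.mpr ⟨howE, rfl⟩, ?_⟩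
        intro x hx
        by_contra hne
        have h2 : ({(o, w), x} : Finset (V × V)) ⊆ E.filter (fun e => e.2 = w) := by
          intro y hy
          rcases Finset.mem_insert.mp hy with h | h
          · rw [h]; exact Finset.mem_filter.mpr ⟨howE, rfl⟩
          · rw [Finset.mem_singleton.mp h]; exact hx
        have h3 : ({(o, w), x} : Finset (V × V)).card = 2 := by
          rw [Finset.card_insert_of_notMem (by simpa using fun h => hne h.symm)]
          simp
        have := Finset.card_le_card h2
        rw [h3] at this
        have := h_in_le w
        omega
      have h_filters_1 : ∀ v : V, v ≠ o → E'.filter (fun e => e.1 = v) = E.filter (fun e => e.1 = v) := by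
        intro v hv
        ext e
        simp only [hE', Finset.mem_filter, Finset.mem_erase]
        constructor
        · rintro ⟨⟨_, he⟩, h1⟩; exact ⟨he, h1⟩
        · rintro ⟨he, h1⟩
          refine ⟨⟨?_, he⟩, h1⟩
          intro h; rw [h] at h1; exact hv h1.symm
      have h_filters_2 : ∀ v : V, v ≠ w → E'.filter (fun e => e.2 = v) = E.filter (fun e => e.2 = v) := by
        intro v hv
        ext e
        simp only [hE', Finset.mem_filter, Finset.mem_erase]
        constructor
        · rintro ⟨⟨_, he⟩, h1⟩; exact ⟨he, h1⟩
        · rintro ⟨he, h1⟩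
          refine ⟨⟨?_, he⟩, h1⟩
          intro h; rw [h] at h1; exact hv h1.symm
      -- hypotheses for E'
      have h_noloop' : ∀ v : V, (v, v) ∉ E' := fun v h => h_noloop v (hsub h)
      have h_no_in_w : ∀ u : V, (u, w) ∉ E' := by
        intro u h
        have hmem : (u, w) ∈ E.filter (fun e => e.2 = w) :=
          Finset.mem_filter.mpr ⟨hsub h, rfl⟩
        rw [h_in_w, Finset.mem_singleton] at hmem
        exact (Finset.mem_erase.mp h).1 hmem
      have h_no_out_o'' : ∀ v : V, (o', v) ∉ E' := fun v h => h_no_out_o' v (hsub h)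
      have h_out_w : (E'.filter (fun e => e.1 = w)).card = 1 := by
        rw [h_filters_1 w hwo]
        have h1 : (E.filter (fun e => e.1 = w)).card ≤ 1 := h_out_le w
        have h2 : (E.filter (fun e => e.2 = w)).card = (E.filter (fun e => e.1 = w)).card :=
          h_balance w hwo hwo'
        rw [h_in_w] at h2
        simp at h2
        omega
      have hbow : b ≠ (o, w) := by
        intro h
        rw [h] at hb2
        exact hwo' hb2
      have h_in_o'' : (E'.filter (fun e => e.2 = o')).card = 1 := by
        rw [h_filters_2 o' (Ne.symm hwo')]
        exact h_in_o'
      have h_balance' : ∀ v : V, v ≠ w → v ≠ o' →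
          (E'.filter (fun e => e.2 = v)).card = (E'.filter (fun e => e.1 = v)).card := by
        intro v hvw hvo'
        by_cases hvo : v = o
        · subst hvo
          have h1 : E'.filter (fun e => e.2 = v) = ∅ := by
            rw [Finset.filter_eq_empty_iff]
            intro e he h
            exact h_no_in_o e.1 (by rw [← h, Prod.mk.eta]; exact hsub he)
          have h2 : E'.filter (fun e => e.1 = v) = ∅ := by
            rw [Finset.filter_eq_empty_iff]
            intro e he h
            have : e ∈ E.filter (fun e => e.1 = v) := Finset.mem_filter.mpr ⟨hsub he, h⟩
            rw [ha, Finset.mem_singleton] at this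
            exact (Finset.mem_erase.mp he).1 (this.trans haow)
          rw [h1, h2]
        · rw [h_filters_1 v hvo, h_filters_2 v hvw]
          exact h_balance v hvo hvo'
      have h_in_le' : ∀ v : V, (E'.filter (fun e => e.2 = v)).card ≤ 1 := by
        intro v
        exact le_trans (Finset.card_le_card (Finset.filter_subset_filter _ hsub)) (h_in_le v)
      have h_out_le' : ∀ v : V, (E'.filter (fun e => e.1 = v)).card ≤ 1 := by
        intro v
        exact le_trans (Finset.card_le_card (Finset.filter_subset_filter _ hsub)) (h_out_le v)
      have h_time' : ∃ (t : V → ℝ) (ε : ℝ), 0 < ε ∧ ∀ u v : V, (u, v) ∈ E' → t v ≥ t u + ε :=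
        ⟨t, ε, hε, fun u v h => ht u v (hsub h)⟩
      obtain ⟨n, p, hn1, hp0, hpn, hpinj, hparc⟩ := ih E' w o' hcard' hwo' h_noloop'
        h_no_in_w h_no_out_o'' h_out_w h_in_o'' h_balance' h_in_le' h_out_le' h_time'
      -- extend
      have hpo : ∀ j ≤ n, p j ≠ o := by
        intro j hj hje
        match j with
        | 0 => rw [hp0] at hje; exact hwo hje
        | Nat.succ m =>
          have harc : (p m, p (m + 1)) ∈ E' := (hparc _).mpr ⟨m, by omega, rfl⟩
          rw [hje] at harc
          exact h_no_in_o _ (hsub harc)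
      refine ⟨n + 1, fun i => match i with | 0 => o | Nat.succ k => p k, by omega, rfl, hpn, ?_, ?_⟩
      · intro i hi j hj hij
        match i, j with
        | 0, 0 => rfl
        | 0, Nat.succ k =>
          exact absurd hij.symm (hpo k (by omega))
        | Nat.succ k, 0 =>
          exact absurd hij (hpo k (by omega))
        | Nat.succ k, Nat.succ l =>
          simp only at hij
          have := hpinj k (by omega) l (by omega) hij
          omega
      · intro e
        constructor
        · intro he
          by_cases hew : e = (o, w)
          · exact ⟨0, by omega, by rw [hew]; simp [hp0]⟩
          · have he' : e ∈ E' := Finset.mem_erase.mpr ⟨hew, he⟩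
            obtain ⟨i, hi, hei⟩ := (hparc e).mp he'
            exact ⟨i + 1, by omega, hei⟩
        · rintro ⟨i, hi, rfl⟩
          match i with
          | 0 => simpa [hp0] using howE
          | Nat.succ k =>
            have : (p k, p (k + 1)) ∈ E' := (hparc _).mpr ⟨k, by omega, rfl⟩
            exact hsub this

/-- Degree/flow-conservation constraints together with time-propagation constraints
(`t v ≥ t u + ε` along every arc, `ε > 0`) force the arc set `E` to be a single simple
directed path from `o` to `o'`. -/
theorem arcs_form_simple_path_of_time_increase
    {V : Type*} [Fintype V] [DecidableEq V] (o o' : V) (hoo' : o ≠ o')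
    (E : Finset (V × V))
    (h_noloop : ∀ v : V, (v, v) ∉ E)
    (h_no_in_o : ∀ u : V, (u, o) ∉ E)
    (h_no_out_o' : ∀ v : V, (o', v) ∉ E)
    (h_out_o : (E.filter (fun e => e.1 = o)).card = 1)
    (h_in_o' : (E.filter (fun e => e.2 = o')).card = 1)
    (h_balance : ∀ v : V, v ≠ o → v ≠ o' →
      (E.filter (fun e => e.2 = v)).card = (E.filter (fun e => e.1 = v)).card)
    (h_time : ∃ (t : V → ℝ) (ε : ℝ), 0 < ε ∧ ∀ u v : V, (u, v) ∈ E → t v ≥ t u + ε) :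
    ∃ (n : ℕ) (v : ℕ → V), 1 ≤ n ∧ v 0 = o ∧ v n = o' ∧
      (∀ i ≤ n, ∀ j ≤ n, v i = v j → i = j) ∧
      (∀ e : V × V, e ∈ E ↔ ∃ i < n, e = (v i, v (i + 1))) := by
  obtain ⟨t, ε, hε, ht⟩ := h_time
  exact path_aux E.card E o o' le_rfl hoo' h_noloop h_no_in_o h_no_out_o' h_out_o h_in_o'
    h_balance
    (indeg_le_one o o' E h_no_out_o' (le_of_eq h_out_o) h_balance t ε hε ht)
    (outdeg_le_one o o' E h_no_out_o' (le_of_eq h_out_o) h_balance t ε hε ht)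
    ⟨t, ε, hε, ht⟩
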